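/- Let Γ be an étale groupoid, K a compact subset of Γ, and N ⊆ K. Then the source image s[N] is nowhere dense in the unit space Γ⁰ if and only if N is nowhere dense in Γ. -/

import Mathlib

open Filter Topology

/-- An étale groupoid: a groupoid (partial multiplication encoded via `Option`,
with inverse, source and range maps) carrying a topology making inversion and
multiplication continuous, with open source map and a basis of open slices. -/
structure EtaleGroupoid (Γ : Type*) [TopologicalSpace Γ] where
  mul : Γ → Γ → Option Γ
  inv : Γ → Γ
  s : Γ → Γ
  r : Γ → Γ
  s_unit : ∀ γ, mul γ (s γ) = some γ
  r_unit : ∀ γ, mul (r γ) γ = some γ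
  mul_isSome : ∀ a b, (mul a b).isSome ↔ s a = r b
  inv_mul : ∀ γ, mul (inv γ) γ = some (s γ)
  mul_inv : ∀ γ, mul γ (inv γ) = some (r γ)
  inv_inv : ∀ γ, inv (inv γ) = γ
  s_inv : ∀ γ, s (inv γ) = r γ
  r_inv : ∀ γ, r (inv γ) = s γ
  s_s : ∀ γ, s (s γ) = s γ
  r_s : ∀ γ, r (s γ) = s γ
  inv_s : ∀ γ, inv (s γ) = s γ
  s_r : ∀ γ, s (r γ) = r γ
  r_r : ∀ γ, r (r γ) = r γ
  inv_r : ∀ γ, inv (r γ) = r γ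
  mul_s_s : ∀ γ, mul (s γ) (s γ) = some (s γ)
  mul_r_r : ∀ γ, mul (r γ) (r γ) = some (r γ)
  s_eq_r : ∀ {a b c}, mul a b = some c → s a = r b
  s_mul : ∀ {a b c}, mul a b = some c → s c = s b
  r_mul : ∀ {a b c}, mul a b = some c → r c = r a
  inv_mul_inv : ∀ {a b c}, mul a b = some c → mul (inv b) (inv a) = some (inv c)
  mul_assoc' : ∀ {a b c p q pc}, mul a b = some p → mul b c = some q →
    mul p c = some pc → mul a q = some pc
  continuous_inv : Continuous inv
  continuous_s : Continuous s
  continuous_r : Continuous r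
  isOpenMap_s : IsOpenMap s
  continuous_mul : Continuous fun p : {p : Γ × Γ // (mul p.1 p.2).isSome} =>
    (mul p.1.1 p.1.2).get p.2
  etale : ∀ γ : Γ, ∃ O : Set Γ, IsOpen O ∧ γ ∈ O ∧ Set.InjOn s O ∧ Set.InjOn r O

variable {Γ : Type*} [TopologicalSpace Γ]

/-- The unit space `Γ⁰` of an étale groupoid. -/
def EtaleGroupoid.units (G : EtaleGroupoid Γ) : Set Γ := Set.range G.s

/-- A slice: a subset on which both the source and range maps are injective. -/
def EtaleGroupoid.IsSlice (G : EtaleGroupoid Γ) (B : Set Γ) : Prop :=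
  Set.InjOn G.s B ∧ Set.InjOn G.r B

/-- A biclosed subset: both `s[B]` and `r[B]` are closed in the unit space `Γ⁰`. -/
def EtaleGroupoid.IsBiclosed (G : EtaleGroupoid Γ) (B : Set Γ) : Prop :=
  IsClosed ((fun u : G.units => (u : Γ)) ⁻¹' (G.s '' B)) ∧
  IsClosed ((fun u : G.units => (u : Γ)) ⁻¹' (G.r '' B))

/-- A bicompact subset: a biclosed compact subset of an open slice. -/
def EtaleGroupoid.IsBicompact (G : EtaleGroupoid Γ) (B : Set Γ) : Prop :=
  IsCompact B ∧ G.IsBiclosed B ∧ ∃ O : Set Γ, IsOpen O ∧ G.IsSlice O ∧ B ⊆ O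

section Aux

variable {X Y : Type*} [TopologicalSpace X] [TopologicalSpace Y]

lemma nwd_mono {A B : Set X} (h : A ⊆ B) (hB : IsNowhereDense B) : IsNowhereDense A := by
  have : interior (closure A) ⊆ interior (closure B) :=
    interior_mono (closure_mono h)
  exact Set.eq_empty_of_subset_empty (hB ▸ this)

lemma nwd_union {A B : Set X} (hA : IsNowhereDense A) (hB : IsNowhereDense B) :
    IsNowhereDense (A ∪ B) := by
  unfold IsNowhereDense at *
  rw [closure_union]
  set U := interior (closure A ∪ closure B) with hU
  have h1 : U \ closure B ⊆ interior (closure A) := by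
    apply interior_maximal
    · intro x hx
      rcases interior_subset hx.1 with h | h
      · exact h
      · exact absurd h hx.2
    · exact isOpen_interior.sdiff isClosed_closure
  have h2 : U ⊆ closure B := by
    intro x hx
    by_contra hxB
    exact absurd (h1 ⟨hx, hxB⟩) (by simp [hA])
  have h3 : U ⊆ interior (closure B) := interior_maximal h2 isOpen_interior
  exact Set.eq_empty_of_subset_empty (hB ▸ h3)

lemma nwd_biUnion {ι : Type*} (t : Finset ι) (f : ι → Set X)
    (h : ∀ i ∈ t, IsNowhereDense (f i)) : IsNowhereDense (⋃ i ∈ t, f i) := by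
  classical
  induction t using Finset.induction_on with
  | empty => simp [isNowhereDense_empty]
  | @insert a s hx ih =>
    rw [Finset.set_biUnion_insert]
    exact nwd_union (h a (Finset.mem_insert_self a s))
      (ih fun i hi => h i (Finset.mem_insert_of_mem hi))

/-- If `f` is continuous and open and `f '' A` is nowhere dense, so is `A`. -/
lemma nwd_of_image {f : X → Y} (hc : Continuous f) (ho : IsOpenMap f) {A : Set X}
    (h : IsNowhereDense (f '' A)) : IsNowhereDense A := by
  unfold IsNowhereDense at *
  rw [Set.eq_empty_iff_forall_notMem]
  intro x hx
  have hU : IsOpen (f '' interior (closure A)) := ho _ isOpen_interior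
  have hsub : f '' interior (closure A) ⊆ closure (f '' A) := by
    refine Set.Subset.trans (Set.image_mono (f := f) interior_subset) ?_
    exact (image_closure_subset_closure_image hc)
  have : f x ∈ interior (closure (f '' A)) :=
    interior_maximal hsub hU ⟨x, hx, rfl⟩
  rw [h] at this
  exact this

/-- If `f` is continuous and open, `U` is open, `f` is injective on `U`, and
`A ⊆ U` is nowhere dense, then `f '' A` is nowhere dense. -/
lemma nwd_image {f : X → Y} (hc : Continuous f) (ho : IsOpenMap f) {U A : Set X}
    (hUo : IsOpen U) (hinj : Set.InjOn f U) (hAU : A ⊆ U) (hA : IsNowhereDense A) :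
    IsNowhereDense (f '' A) := by
  unfold IsNowhereDense at *
  rw [Set.eq_empty_iff_forall_notMem]
  intro y hy
  -- W = f⁻¹(interior (closure (f '' A))) ∩ U is open; we show W ⊆ closure A and W ≠ ∅
  set V := interior (closure (f '' A)) with hV
  have hVo : IsOpen V := isOpen_interior
  -- V meets f '' U since y ∈ V ⊆ closure (f '' A) and f '' A ⊆ f '' U
  have hmeet : (V ∩ f '' U).Nonempty := by
    have hyc : y ∈ closure (f '' A) := interior_subset hy
    have := mem_closure_iff.1 hyc V hVo hy
    rcases this with ⟨z, hzV, hzA⟩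
    exact ⟨z, hzV, Set.image_mono (f := f) hAU hzA⟩
  set W := f ⁻¹' V ∩ U with hW
  have hWo : IsOpen W := (hVo.preimage hc).inter hUo
  have hWne : W.Nonempty := by
    rcases hmeet with ⟨z, hzV, x, hxU, rfl⟩
    exact ⟨x, hzV, hxU⟩
  have hWcl : W ⊆ closure A := by
    intro x hx
    rw [mem_closure_iff]
    intro P hPo hxP
    -- f '' (P ∩ W) is an open nbhd of f x, meets f '' A
    have hPWo : IsOpen (f '' (P ∩ W)) := ho _ (hPo.inter hWo)
    have hfx : f x ∈ f '' (P ∩ W) := ⟨x, ⟨hxP, hx⟩, rfl⟩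
    have hfxcl : f x ∈ closure (f '' A) := interior_subset hx.1
    rcases mem_closure_iff.1 hfxcl _ hPWo hfx with ⟨z, ⟨p, ⟨hpP, hpW⟩, hpz⟩, a, haA, haz⟩
    have : a = p := hinj (hAU haA) hpW.2 (by rw [haz, hpz])
    exact ⟨p, hpP, this ▸ haA⟩
  have : (interior (closure A)).Nonempty :=
    hWne.mono (interior_maximal hWcl hWo)
  rw [hA] at this
  exact this.ne_empty rfl

end Aux

/-- For `N ⊆ K ⊆ Γ` with `K` compact in an étale groupoid, `s[N]` is nowhere
dense in the unit space iff `N` is nowhere dense. -/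
theorem stmt5 (G : EtaleGroupoid Γ) (K N : Set Γ) (hK : IsCompact K) (hN : N ⊆ K) :
    IsNowhereDense ((fun u : G.units => (u : Γ)) ⁻¹' (G.s '' N)) ↔ IsNowhereDense N := by
  have hunits : IsOpen (G.units : Set Γ) := G.isOpenMap_s.isOpen_range
  have hvalc : Continuous (fun u : G.units => (u : Γ)) := continuous_subtype_val
  have hvalo : IsOpenMap (fun u : G.units => (u : Γ)) := hunits.isOpenMap_subtype_val
  have hvali : Set.InjOn (fun u : G.units => (u : Γ)) Set.univ :=
    Set.injOn_of_injective Subtype.val_injective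
  have hsub : G.s '' N ⊆ G.units := by
    rintro _ ⟨n, _, rfl⟩; exact ⟨n, rfl⟩
  have himg : (fun u : G.units => (u : Γ)) ''
      ((fun u : G.units => (u : Γ)) ⁻¹' (G.s '' N)) = G.s '' N := by
    rw [Set.image_preimage_eq_inter_range, Subtype.range_val]
    exact Set.inter_eq_left.2 hsub
  constructor
  · intro h
    -- s '' N is nowhere dense in Γ
    have hsN : IsNowhereDense (G.s '' N) := by
      rw [← himg]
      exact nwd_image hvalc hvalo isOpen_univ hvali (Set.subset_univ _) h
    exact nwd_of_image G.continuous_s G.isOpenMap_s hsN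
  · intro h
    -- cover K by finitely many open slices
    choose O hOopen hOmem hOinjs _ using G.etale
    obtain ⟨t, _, hcov⟩ := hK.elim_nhds_subcover O
      (fun γ _ => (hOopen γ).mem_nhds (hOmem γ))
    have hNcov : N = ⋃ γ ∈ t, N ∩ O γ := by
      ext x
      simp only [Set.mem_iUnion, Set.mem_inter_iff]
      constructor
      · intro hx
        rcases Set.mem_iUnion₂.1 (hcov (hN hx)) with ⟨γ, hγ, hxO⟩
        exact ⟨γ, hγ, hx, hxO⟩
      · rintro ⟨γ, _, hx, _⟩; exact hx
    have hsN : IsNowhereDense (G.s '' N) := by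
      rw [hNcov, Set.image_iUnion₂]
      refine nwd_biUnion t _ (fun γ _ => ?_)
      exact nwd_image G.continuous_s G.isOpenMap_s (hOopen γ) (hOinjs γ)
        Set.inter_subset_right (nwd_mono Set.inter_subset_left h)
    rw [← himg] at hsN
    exact nwd_of_image hvalc hvalo hsN
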